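/- Let n ≥ 1 and let A^{(n)}_0 > A^{(n)}_1 > ⋯ > A^{(n)}_{n−1} > 0 be positive decreasing reals. Let D be a real M × M matrix with d_{ii} = −max_{1≤r≤M} Σ_{j≠r} |d_{rj}| for every i, and let κ ≥ 0. Then for any vectors e⁰, e¹, …, e^n ∈ ℝ^M one has ‖ Σ_{k=1}^n A^{(n)}_{n−k}(e^k − e^{k−1}) − κ² D e^n ‖∞ ≥ Σ_{k=1}^n A^{(n)}_{n−k}( ‖e^k‖∞ − ‖e^{k−1}‖∞ ). -/

import Mathlib

/-!
STATEMENT 10: key stability inequality.  Given positive decreasing reals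
`A 0 > A 1 > ⋯ > A (n−1) > 0` (so `A j = A^{(n)}_j`), a matrix `D` whose
diagonal entries all equal minus the maximal off-diagonal absolute row sum,
and `κ ≥ 0`, the discrete convolution structure transfers from the vector
error equation to maximum norms.  The norm on `Fin M → ℝ` is the sup norm.
-/

open Finset

lemma abel_aux : ∀ (n : ℕ), 1 ≤ n → ∀ (A : ℕ → ℝ),
    (∀ j, j < n → 0 < A j) → (∀ j, j + 1 < n → A (j + 1) < A j) →
    ∀ g : ℕ → ℝ, (∀ k, k ≤ n → g k ≤ 0) →
    A 0 * g n ≤ ∑ k ∈ Finset.Icc 1 n, A (n - k) * (g k - g (k - 1)) := by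
  intro n
  induction n with
  | zero => omega
  | succ n ih =>
    intro _ A hApos hAdec g hg
    rcases Nat.eq_zero_or_pos n with rfl | hn
    · simp only [Finset.Icc_self, Finset.sum_singleton]
      have h0 : 0 < A 0 := hApos 0 (by norm_num)
      have := hg 0 (by norm_num)
      simp only [Nat.sub_self]
      nlinarith
    · rw [Finset.sum_Icc_succ_top (by omega : 1 ≤ n + 1)]
      have hcongr : ∑ k ∈ Finset.Icc 1 n, A (n + 1 - k) * (g k - g (k - 1))
          = ∑ k ∈ Finset.Icc 1 n, (fun j => A (j + 1)) (n - k) * (g k - g (k - 1)) := by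
        apply Finset.sum_congr rfl
        intro k hk
        simp only [Finset.mem_Icc] at hk
        congr 2
        omega
      rw [hcongr]
      have hmain := ih hn (fun j => A (j + 1))
        (fun j hj => hApos (j + 1) (by omega))
        (fun j hj => hAdec (j + 1) (by omega)) g (fun k hk => hg k (by omega))
      simp only [Nat.sub_self, Nat.add_sub_cancel] at *
      have h1 : A 1 ≤ A 0 := le_of_lt (hAdec 0 (by omega))
      have hgn : g n ≤ 0 := hg n (by omega)
      nlinarith [hmain]

theorem convolution_maximum_norm_transfer
    (n M : ℕ) (hn : 1 ≤ n)
    (A : ℕ → ℝ)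
    (hApos : ∀ j, j < n → 0 < A j)
    (hAdec : ∀ j, j + 1 < n → A (j + 1) < A j)
    (D : Matrix (Fin M) (Fin M) ℝ)
    (hDdiag : ∀ i : Fin M,
      IsGreatest {x : ℝ | ∃ r : Fin M, x = ∑ j ∈ Finset.univ.erase r, |D r j|}
        (-(D i i)))
    (κ : ℝ) (hκ : 0 ≤ κ)
    (e : ℕ → Fin M → ℝ) :
    ∑ k ∈ Finset.Icc 1 n, A (n - k) * (‖e k‖ - ‖e (k - 1)‖) ≤
      ‖(∑ k ∈ Finset.Icc 1 n, A (n - k) • (e k - e (k - 1)))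
        - κ ^ 2 • D.mulVec (e n)‖ := by
  rcases Nat.eq_zero_or_pos M with rfl | hM
  · have hz : ∀ f : Fin 0 → ℝ, ‖f‖ = 0 := fun f => by
      rw [Subsingleton.elim f 0, norm_zero]
    simp [hz]
  · obtain ⟨i, -, hi⟩ := Finset.exists_max_image Finset.univ (fun j => |e n j|)
      ⟨⟨0, hM⟩, Finset.mem_univ _⟩
    have hNi : ‖e n‖ = |e n i| := by
      refine le_antisymm ?_ ?_
      · refine (pi_norm_le_iff_of_nonneg (abs_nonneg (e n i))).mpr fun j => ?_
        simpa [Real.norm_eq_abs] using hi j (Finset.mem_univ j)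
      · simpa [Real.norm_eq_abs] using norm_le_pi_norm (e n) i
    set σ : ℝ := if 0 ≤ e n i then 1 else -1 with hσ
    have hσabs : σ * e n i = |e n i| := by
      rcases le_or_gt 0 (e n i) with h | h
      · simp [hσ, h, abs_of_nonneg h]
      · simp [hσ, not_le.mpr h, abs_of_neg h]
    have hσ1 : |σ| = 1 := by
      rcases le_or_gt 0 (e n i) with h | h
      · simp [hσ, h]
      · simp [hσ, not_le.mpr h]
    have hbound : ∀ k, σ * e k i ≤ ‖e k‖ := by
      intro k
      calc σ * e k i ≤ |σ * e k i| := le_abs_self _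
        _ = |e k i| := by rw [abs_mul, hσ1, one_mul]
        _ ≤ ‖e k‖ := by simpa [Real.norm_eq_abs] using norm_le_pi_norm (e k) i
    -- Abel step
    have hgn : σ * e n i - ‖e n‖ = 0 := by rw [hNi, hσabs, sub_self]
    have habel := abel_aux n hn A hApos hAdec (fun k => σ * e k i - ‖e k‖)
      (fun k _ => sub_nonpos.mpr (hbound k))
    simp only [hgn, mul_zero] at habel
    have key1 : ∑ k ∈ Finset.Icc 1 n, A (n - k) * (‖e k‖ - ‖e (k - 1)‖)
        ≤ σ * ∑ k ∈ Finset.Icc 1 n, A (n - k) * (e k i - e (k - 1) i) := by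
      have hsplit : ∑ k ∈ Finset.Icc 1 n,
          A (n - k) * ((σ * e k i - ‖e k‖) - (σ * e (k - 1) i - ‖e (k - 1)‖))
          = σ * ∑ k ∈ Finset.Icc 1 n, A (n - k) * (e k i - e (k - 1) i)
            - ∑ k ∈ Finset.Icc 1 n, A (n - k) * (‖e k‖ - ‖e (k - 1)‖) := by
        rw [Finset.mul_sum, ← Finset.sum_sub_distrib]
        exact Finset.sum_congr rfl fun k _ => by ring
      linarith [hsplit ▸ habel]
    -- matrix diagonal dominance step
    have hD : σ * D.mulVec (e n) i ≤ 0 := by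
      have hub : ∑ j ∈ Finset.univ.erase i, |D i j| ≤ -(D i i) :=
        (hDdiag i).2 ⟨i, rfl⟩
      have hcalc : σ * D.mulVec (e n) i = ∑ j, σ * (D i j * e n j) := by
        simp [Matrix.mulVec, dotProduct, Finset.mul_sum]
      rw [hcalc, ← Finset.sum_erase_add _ _ (Finset.mem_univ i)]
      have hterm : σ * (D i i * e n i) = D i i * ‖e n‖ := by
        rw [hNi, ← hσabs]; ring
      have hsum : ∑ j ∈ Finset.univ.erase i, σ * (D i j * e n j)
          ≤ ∑ j ∈ Finset.univ.erase i, |D i j| * ‖e n‖ := by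
        refine Finset.sum_le_sum fun j _ => ?_
        calc σ * (D i j * e n j) ≤ |σ * (D i j * e n j)| := le_abs_self _
          _ = |D i j| * |e n j| := by rw [abs_mul, hσ1, one_mul, abs_mul]
          _ ≤ |D i j| * ‖e n‖ := by
              refine mul_le_mul_of_nonneg_left ?_ (abs_nonneg _)
              simpa [Real.norm_eq_abs] using norm_le_pi_norm (e n) j
      rw [hterm]
      have : ∑ j ∈ Finset.univ.erase i, |D i j| * ‖e n‖
          ≤ (-(D i i)) * ‖e n‖ := by
        rw [← Finset.sum_mul]
        exact mul_le_mul_of_nonneg_right hub (norm_nonneg _)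
      nlinarith [norm_nonneg (e n)]
    -- pointwise evaluation
    set F := (∑ k ∈ Finset.Icc 1 n, A (n - k) • (e k - e (k - 1)))
        - κ ^ 2 • D.mulVec (e n) with hF
    have happly : F i = (∑ k ∈ Finset.Icc 1 n, A (n - k) * (e k i - e (k - 1) i))
        - κ ^ 2 * D.mulVec (e n) i := by
      simp [hF, Finset.sum_apply, Pi.sub_apply, Pi.smul_apply, smul_eq_mul]
    have hκ2 : 0 ≤ κ ^ 2 := sq_nonneg κ
    have hFi : σ * ∑ k ∈ Finset.Icc 1 n, A (n - k) * (e k i - e (k - 1) i)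
        ≤ σ * F i := by
      rw [happly, mul_sub]
      nlinarith [hD]
    calc ∑ k ∈ Finset.Icc 1 n, A (n - k) * (‖e k‖ - ‖e (k - 1)‖)
        ≤ σ * F i := le_trans key1 hFi
      _ ≤ |σ * F i| := le_abs_self _
      _ = |F i| := by rw [abs_mul, hσ1, one_mul]
      _ ≤ ‖F‖ := by simpa [Real.norm_eq_abs] using norm_le_pi_norm F i
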